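/- Let G be a finite group and V a finite-dimensional faithful representation of G over a field k whose characteristic does not divide |G|. If d is a natural number such that k[V]_{≤d} spans k(V) as a vector space over K = k(V)^G, then K is generated as a field extension of k by the invariant polynomials of degree at most 2d+1. In particular, β_field(G,V) ≤ 2·D_span(G,V) + 1. -/

import Mathlib

open MvPolynomial

set_option synthInstance.maxHeartbeats 1000000
set_option maxHeartbeats 1000000

set_option maxHeartbeats 4000000
set_option linter.unusedSectionVars false
set_option linter.unusedVariables false

section Aux
variable {k : Type*} [Field k] {n : ℕ} {G : Type*} [Group G] [Fintype G]
    [MulSemiringAction G (MvPolynomial (Fin n) k)]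
    [SMulCommClass G k (MvPolynomial (Fin n) k)]
    [MulSemiringAction G (FractionRing (MvPolynomial (Fin n) k))]

local notation "P" => MvPolynomial (Fin n) k
local notation "L" => FractionRing (MvPolynomial (Fin n) k)
local notation "φ" => algebraMap P L
local notation "K" => FixedPoints.subfield G L

theorem smul_totalDegree_le
    (hlin : ∀ (g : G) (i : Fin n), ((g • (X i : P)).IsHomogeneous 1))
    (g : G) (p : P) : (g • p).totalDegree ≤ p.totalDegree := by
  have hact : g • p = aeval (fun i => g • (X i : P)) p := by
    have := MvPolynomial.aeval_unique (MulSemiringAction.toAlgHom k P g)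
    calc g • p = (MulSemiringAction.toAlgHom k P g) p := rfl
    _ = aeval (fun i => g • (X i : P)) p := by rw [this]; rfl
  rw [hact]
  conv_lhs => rw [p.as_sum]
  rw [map_sum]
  refine (MvPolynomial.totalDegree_finset_sum _ _).trans (Finset.sup_le fun u hu => ?_)
  rw [aeval_monomial]
  have hhom : ((u.prod fun i e => (g • (X i : P)) ^ e)).IsHomogeneous (u.sum fun _ e => e) := by
    rw [Finsupp.prod, Finsupp.sum]
    exact IsHomogeneous.prod _ _ _ (fun i _ => by simpa using (hlin g i).pow (u i))
  have hmul : ((algebraMap k P) (coeff u p) * u.prod fun i e => (g • (X i : P)) ^ e).IsHomogeneous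
      (u.sum fun _ e => e) := by
    simpa using (isHomogeneous_C _ (coeff u p)).mul hhom
  exact hmul.totalDegree_le.trans (MvPolynomial.le_totalDegree hu)


theorem aux_closure
    (hlin : ∀ (g : G) (i : Fin n), ((g • (X i : P)).IsHomogeneous 1))
    (hcomp : ∀ (g : G) (p : P), g • (φ p) = φ (g • p))
    (hchar : (Fintype.card G : k) ≠ 0)
    (d : ℕ)
    (hspan : Submodule.span K (φ '' {p : P | p.totalDegree ≤ d}) = ⊤) :
    Subfield.closure
        (Set.range (algebraMap k L) ∪ (φ '' {p : P | p.totalDegree ≤ 2*d+1 ∧ ∀ g : G, g • p = p}))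
      = K := by
  classical
  set W : Set L := φ '' {p : P | p.totalDegree ≤ d} with hW
  set K' : Subfield L := Subfield.closure
    (Set.range (algebraMap k L) ∪ (φ '' {p : P | p.totalDegree ≤ 2*d+1 ∧ ∀ g : G, g • p = p}))
    with hK'
  -- the algebra map from k factors through φ
  have htower : ∀ c : k, algebraMap k L c = φ (C c) := by
    intro c
    rw [IsScalarTower.algebraMap_eq k P L]; rfl
  have hCmem : ∀ c : k, algebraMap k L c ∈ K' := fun c =>
    Subfield.subset_closure (Or.inl ⟨c, rfl⟩)
  -- `K' ≤ K`
  have hK'leK : K' ≤ K := by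
    rw [hK', Subfield.closure_le]
    rintro x (⟨c, rfl⟩ | ⟨p, ⟨-, hp⟩, rfl⟩)
    · intro g
      rw [htower c, hcomp]
      congr 1
      rw [← MvPolynomial.algebraMap_eq]
      exact smul_algebraMap g c
    · intro g
      rw [hcomp, hp g]
  -- the transfer/Reynolds operator
  set T : L → L := fun x => ∑ g : G, g • x with hT
  have hTadd : ∀ x y : L, T (x + y) = T x + T y := by
    intro x y
    show (∑ g : G, g • (x + y)) = (∑ g : G, g • x) + ∑ g : G, g • y
    simp only [smul_add]
    exact Finset.sum_add_distrib
  have hTmem : ∀ x : L, T x ∈ K := by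
    intro x g
    show g • (∑ g' : G, g' • x) = ∑ g' : G, g' • x
    rw [Finset.smul_sum]
    simp only [smul_smul]
    exact Fintype.sum_bijective (g * ·) (Group.mulLeft_bijective g) _ _ (fun g' => rfl)
  have hTK : ∀ (c : L), c ∈ K → ∀ x, T (c * x) = c * T x := by
    intro c hc x
    show (∑ g : G, g • (c * x)) = c * ∑ g : G, g • x
    rw [Finset.mul_sum]
    exact Finset.sum_congr rfl fun g _ => by rw [smul_mul', hc g]
  have hTone : T 1 = (Fintype.card G : L) := by
    show (∑ _g : G, _g • (1:L)) = _
    simp [smul_eq_mul]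
  have hcardL : (Fintype.card G : L) ≠ 0 := by
    rw [← map_natCast (algebraMap k L)]
    exact (map_ne_zero_iff _ (algebraMap k L).injective).mpr hchar
  -- `T` on polynomials
  set N : P → P := fun p => ∑ g : G, g • p with hN
  have hTφ : ∀ p : P, T (φ p) = φ (N p) := by
    intro p; simp only [hT, hN, map_sum]; exact Finset.sum_congr rfl fun g _ => hcomp g p
  have hNinv : ∀ (g : G) (p : P), g • N p = N p := by
    intro g p
    show g • (∑ g' : G, g' • p) = ∑ g' : G, g' • p
    rw [Finset.smul_sum]
    simp only [smul_smul]
    exact Fintype.sum_bijective (g * ·) (Group.mulLeft_bijective g) _ _ (fun g' => rfl)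
  have hNdeg : ∀ p : P, (N p).totalDegree ≤ p.totalDegree := by
    intro p
    refine (MvPolynomial.totalDegree_finset_sum _ _).trans (Finset.sup_le fun g _ => ?_)
    exact smul_totalDegree_le hlin g p
  have hTpoly : ∀ p : P, p.totalDegree ≤ 2*d+1 → T (φ p) ∈ K' := by
    intro p hp
    rw [hTφ]
    exact Subfield.subset_closure (Or.inr ⟨N p, ⟨(hNdeg p).trans hp, fun g => hNinv g p⟩, rfl⟩)
  -- pick a basis of `L` over `K` inside `W`
  obtain ⟨bs, hbsW, hbsspan, hbsli⟩ := exists_linearIndependent ↥K W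
  rw [hspan] at hbsspan
  have hbsfin : bs.Finite := hbsli.setFinite
  haveI : Fintype bs := hbsfin.fintype
  set b : Module.Basis bs ↥K L := Module.Basis.mk hbsli (by rw [Subtype.range_coe, hbsspan]) with hb
  have hbval : ∀ i : bs, b i = (i : L) := fun i => by rw [hb, Module.Basis.mk_apply]
  -- the Gram matrix
  set Tk : L → ↥K := fun x => ⟨T x, hTmem x⟩ with hTk
  set A : Matrix bs bs ↥K := Matrix.of fun i j => Tk ((i : L) * (j : L)) with hA
  have hTkadd : ∀ x y : L, (⟨T (x+y), hTmem _⟩ : ↥K) = ⟨T x, hTmem _⟩ + ⟨T y, hTmem _⟩ :=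
    fun x y => Subtype.ext (hTadd x y)
  set TkL : L →ₗ[↥K] ↥K :=
    { toFun := Tk
      map_add' := fun x y => Subtype.ext (hTadd x y)
      map_smul' := fun c x => Subtype.ext (hTK (c : L) c.2 x) } with hTkLdef
  have hTkL : ∀ x : L, TkL x = Tk x := fun x => rfl
  have hdet : A.det ≠ 0 := by
    intro h0
    obtain ⟨v, hv, hvA⟩ := Matrix.exists_vecMul_eq_zero_iff.mpr h0
    set x : L := ∑ i : bs, v i • (i : L) with hx
    have hxne : x ≠ 0 := fun hx0 =>
      hv (funext fun i => Fintype.linearIndependent_iff.mp hbsli v (by rw [← hx0, hx]) i)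
    have hTxj : ∀ j : bs, Tk (x * (j : L)) = 0 := by
      intro j
      have hxj : x * (j : L) = ∑ i : bs, v i • ((i : L) * (j : L)) := by
        rw [hx, Finset.sum_mul]
        exact Finset.sum_congr rfl fun i _ => smul_mul_assoc (v i) (i : L) (j : L)
      have : Tk (x * (j:L)) = ∑ i : bs, v i * A i j := by
        rw [← hTkL, hxj, map_sum]
        exact Finset.sum_congr rfl fun i _ => by rw [map_smul, hTkL]; rfl
      rw [this]
      have := congrFun hvA j
      simpa [Matrix.vecMul, dotProduct] using this
    have h1 : Tk (1 : L) = 0 := by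
      have hrx : x⁻¹ = ∑ j : bs, b.repr x⁻¹ j • b j := (b.sum_repr x⁻¹).symm
      have hxx : x * x⁻¹ = ∑ j : bs, b.repr x⁻¹ j • (x * b j) := by
        conv_lhs => rw [hrx]
        rw [Finset.mul_sum]
        exact Finset.sum_congr rfl fun j _ => mul_smul_comm _ _ _
      have : Tk (1 : L) = ∑ j : bs, b.repr x⁻¹ j • TkL (x * b j) := by
        rw [← hTkL, ← mul_inv_cancel₀ hxne, hxx, map_sum]
        exact Finset.sum_congr rfl fun j _ => map_smul _ _ _
      rw [this]
      refine Finset.sum_eq_zero fun j _ => ?_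
      have : TkL (x * b j) = 0 := by rw [hTkL, hbval j, hTxj j]
      rw [this, smul_zero]
    apply hcardL
    have := congrArg (Subtype.val) h1
    rw [← hTone]
    exact this
  have hAunit : IsUnit A.det := isUnit_iff_ne_zero.mpr hdet
  -- coordinates formula
  have hrepr : ∀ (x : L) (j : bs), b.repr x j = ∑ i, A⁻¹ j i * Tk ((i : L) * x) := by
    intro x j
    have hw : ∀ i : bs, Tk ((i : L) * x) = (A.mulVec fun j => b.repr x j) i := by
      intro i
      have hxr : (i : L) * x = ∑ j : bs, b.repr x j • ((i : L) * b j) := by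
        conv_lhs => rw [← b.sum_repr x]
        rw [Finset.mul_sum]
        exact Finset.sum_congr rfl fun j _ => mul_smul_comm _ _ _
      rw [← hTkL, hxr, map_sum]
      rw [Matrix.mulVec, dotProduct]
      refine Finset.sum_congr rfl fun j' _ => ?_
      rw [map_smul, hTkL, hbval j', smul_eq_mul, mul_comm]
      rfl
    have hinv : A⁻¹.mulVec (A.mulVec fun j => b.repr x j) = fun j => b.repr x j := by
      rw [Matrix.mulVec_mulVec, Matrix.nonsing_inv_mul A hAunit, Matrix.one_mulVec]
    calc b.repr x j = A⁻¹.mulVec (A.mulVec fun j => b.repr x j) j := by rw [hinv]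
    _ = ∑ i, A⁻¹ j i * Tk ((i : L) * x) := by
        rw [Matrix.mulVec, dotProduct]
        exact Finset.sum_congr rfl fun i _ => by rw [hw i]
  -- the subfield `Kc` of `K` of elements lying in `K'`
  set Kc : Subfield ↥K := Subfield.comap (Subfield.subtype K) K' with hKc
  have hKcmem : ∀ c : ↥K, c ∈ Kc ↔ (c : L) ∈ K' := fun c => Iff.rfl
  have hsmall : ∀ (p q : P), p.totalDegree + q.totalDegree ≤ 2*d+1 →
      ((Tk (φ p * φ q) : ↥K) : L) ∈ K' := by
    intro p q h
    rw [← map_mul]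
    exact hTpoly _ ((totalDegree_mul p q).trans h)
  have hAmem : ∀ i j : bs, A i j ∈ Kc := by
    intro i j
    obtain ⟨p, hp, hpe⟩ := hbsW i.2
    obtain ⟨q, hq, hqe⟩ := hbsW j.2
    have : A i j = Tk (φ p * φ q) := by rw [hA]; rw [Matrix.of_apply, hpe, hqe]
    rw [hKcmem, this]
    exact hsmall p q (by simp only [Set.mem_setOf_eq] at hp hq; omega)
  have hAinvmem : ∀ i j : bs, A⁻¹ i j ∈ Kc := by
    set A₀ : Matrix bs bs ↥Kc := Matrix.of fun i j => ⟨A i j, hAmem i j⟩ with hA₀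
    have hmap : (Subfield.subtype Kc).mapMatrix A₀ = A := rfl
    have hdet₀ : A₀.det ≠ 0 := by
      intro h
      apply hdet
      have h2 := RingHom.map_det (Subfield.subtype Kc) A₀
      rw [h, map_zero, hmap] at h2
      exact h2.symm
    have hright : A * ((Subfield.subtype Kc).mapMatrix A₀⁻¹) = 1 := by
      rw [← hmap, ← map_mul, Matrix.mul_nonsing_inv A₀ (isUnit_iff_ne_zero.mpr hdet₀)]
      exact RingHom.map_one _
    have hAinv : A⁻¹ = (Subfield.subtype Kc).mapMatrix A₀⁻¹ := Matrix.inv_eq_right_inv hright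
    intro i j
    rw [hAinv]
    exact (A₀⁻¹ i j).2
  -- the module `M`
  set M : Submodule ↥K' L := Submodule.span ↥K' bs with hM
  have hbsM : ∀ x ∈ bs, x ∈ M := fun x hx => Submodule.subset_span hx
  have hxM : ∀ x : L, (∀ i : bs, ((Tk ((i : L) * x) : ↥K) : L) ∈ K') → x ∈ M := by
    intro x hx
    have hx2 : x = ∑ j : bs, b.repr x j • b j := (b.sum_repr x).symm
    rw [hx2]
    refine Submodule.sum_mem M fun j _ => ?_
    have hj : ((b.repr x j : ↥K) : L) ∈ K' := by
      rw [hrepr x j]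
      have hcoe : (((∑ i, A⁻¹ j i * Tk ((i : L) * x)) : ↥K) : L)
          = ∑ i, ((A⁻¹ j i : ↥K) : L) * ((Tk ((i : L) * x) : ↥K) : L) := by
        push_cast
        rfl
      rw [hcoe]
      exact Subfield.sum_mem _ fun i _ =>
        Subfield.mul_mem _ ((hKcmem _).mp (hAinvmem j i)) (hx i)
    have hjval : b.repr x j • b j = (⟨((b.repr x j : ↥K) : L), hj⟩ : ↥K') • b j := rfl
    rw [hjval]
    rw [hbval j]
    exact Submodule.smul_mem M _ (hbsM (j : L) j.2)
  -- polynomials of small degree multiply `M` into `M`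
  have hC0 : ∀ (p : P), p.totalDegree ≤ 1 → ∀ i : bs, φ p * (i : L) ∈ M := by
    intro p hp i
    apply hxM
    intro i'
    obtain ⟨q', hq', he'⟩ := hbsW i'.2
    obtain ⟨q, hq, he⟩ := hbsW i.2
    simp only [Set.mem_setOf_eq] at hq hq'
    have : (i' : L) * (φ p * (i : L)) = φ (q' * p) * φ q := by
      rw [map_mul, he, he']; ring
    rw [this]
    refine hsmall _ _ ?_
    calc (q' * p).totalDegree + q.totalDegree
        ≤ (q'.totalDegree + p.totalDegree) + q.totalDegree :=
          Nat.add_le_add_right (totalDegree_mul _ _) _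
      _ ≤ 2*d+1 := by omega
  have hC0' : ∀ (p : P), p.totalDegree ≤ 1 → ∀ m ∈ M, φ p * m ∈ M := by
    intro p hp m hm
    rw [hM] at hm
    induction hm using Submodule.span_induction with
    | mem x hx => exact hC0 p hp ⟨x, hx⟩
    | zero => rw [mul_zero]; exact M.zero_mem
    | add x y _ _ ihx ihy => rw [mul_add]; exact M.add_mem ihx ihy
    | smul c x _ ih =>
        have : φ p * (c • x) = c • (φ p * x) := mul_smul_comm _ _ _
        rw [this]
        exact M.smul_mem c ih
  have hC1 : ∀ (p : P), ∀ m ∈ M, φ p * m ∈ M := by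
    intro p
    induction p using MvPolynomial.induction_on with
    | C a =>
        intro m hm
        rw [← htower a]
        exact M.smul_mem (⟨algebraMap k L a, hCmem a⟩ : ↥K') hm
    | add p q ihp ihq =>
        intro m hm
        rw [map_add, add_mul]
        exact M.add_mem (ihp m hm) (ihq m hm)
    | mul_X p i ih =>
        intro m hm
        rw [map_mul, mul_comm (φ p) (φ (X i)), mul_assoc]
        exact hC0' (X i) (le_of_eq (totalDegree_X i)) _ (ih m hm)
  -- `M` is all of `L`
  haveI hMfd : FiniteDimensional ↥K' ↥M := by
    rw [hM]
    exact FiniteDimensional.span_of_finite _ hbsfin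
  have hmulsurj : ∀ (q : P), φ q ≠ 0 →
      ∀ y : L, y ∈ M → ∃ m ∈ M, φ q * m = y := by
    intro q hq y hy
    set f : ↥M →ₗ[↥K'] ↥M :=
      { toFun := fun m => ⟨φ q * (m : L), hC1 q (m : L) m.2⟩
        map_add' := fun a b => Subtype.ext (by push_cast; ring)
        map_smul' := fun c a => Subtype.ext (by
          show φ q * ((c : L) * (a : L)) = (c : L) * (φ q * (a : L))
          ring) } with hf
    have hinj : Function.Injective f := by
      intro a b hab
      have := congrArg (Subtype.val) hab
      exact Subtype.ext (mul_left_cancel₀ hq this)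
    obtain ⟨m, hm⟩ := (LinearMap.injective_iff_surjective.mp hinj) ⟨y, hy⟩
    exact ⟨(m : L), m.2, congrArg (Subtype.val) hm⟩
  have hbs_ne : bs.Nonempty := by
    rcases Set.eq_empty_or_nonempty bs with h | h
    · exfalso
      rw [h, Submodule.span_empty] at hbsspan
      exact absurd hbsspan bot_ne_top
    · exact h
  obtain ⟨x₀, hx₀⟩ := hbs_ne
  obtain ⟨q₀, hq₀d, hq₀e⟩ := hbsW hx₀
  have hx₀ne : x₀ ≠ 0 := hbsli.ne_zero ⟨x₀, hx₀⟩
  have hq₀ne : φ q₀ ≠ 0 := by rw [hq₀e]; exact hx₀ne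
  have h1M : (1 : L) ∈ M := by
    obtain ⟨m, hmM, hm⟩ := hmulsurj q₀ hq₀ne x₀ (hbsM x₀ hx₀)
    rw [← hq₀e] at hm
    have : m = 1 := by
      have h2 : φ q₀ * m = φ q₀ * 1 := by rw [hm, mul_one]
      exact mul_left_cancel₀ hq₀ne h2
    rwa [this] at hmM
  have hMtop : ∀ z : L, z ∈ M := by
    intro z
    obtain ⟨pz, qz, hqz, hz⟩ := IsFractionRing.div_surjective (A := P) z
    have hqzne : φ qz ≠ 0 :=
      (map_ne_zero_iff φ (IsFractionRing.injective P L)).mpr (nonZeroDivisors.ne_zero hqz)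
    have hpzM : φ pz ∈ M := by
      have := hC1 pz 1 h1M
      rwa [mul_one] at this
    obtain ⟨m, hmM, hm⟩ := hmulsurj qz hqzne (φ pz) hpzM
    have : m = z := by
      rw [← hz]
      field_simp [hqzne] at hm ⊢
      rw [← hm]
    rwa [this] at hmM
  -- conclude
  have hKleK' : K ≤ K' := by
    intro f hf
    have hfM := hMtop f
    rw [hM] at hfM
    rw [show bs = Set.range ((↑) : bs → L) from (Subtype.range_coe).symm] at hfM
    obtain ⟨c, hc⟩ := (Submodule.mem_span_range_iff_exists_fun ↥K').mp hfM
    have hTf : T f = (Fintype.card G : L) * f := by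
      show (∑ g : G, g • f) = _
      rw [Finset.sum_congr rfl fun g _ => hf g]
      simp [Finset.sum_const, nsmul_eq_mul]
    have h2 : T f = ∑ i : bs, (c i : L) * T (i : L) := by
      rw [← hc]
      rw [show T = ⇑(AddMonoidHom.mk' T hTadd) from rfl, map_sum]
      refine Finset.sum_congr rfl fun i _ => ?_
      show T ((c i : L) * (i : L)) = _
      exact hTK _ (hK'leK (c i).2) _
    have hTiK' : ∀ i : bs, T (i : L) ∈ K' := by
      intro i
      obtain ⟨q, hqd, hqe⟩ := hbsW i.2
      simp only [Set.mem_setOf_eq] at hqd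
      rw [← hqe]
      exact hTpoly q (by omega)
    have hsum : (Fintype.card G : L) * f ∈ K' := by
      rw [← hTf, h2]
      exact Subfield.sum_mem _ fun i _ => Subfield.mul_mem _ (c i).2 (hTiK' i)
    have hcardK' : (Fintype.card G : L) ∈ K' := by
      rw [← map_natCast (algebraMap k L)]
      exact hCmem _
    have hfinal : f = ((Fintype.card G : L))⁻¹ * ((Fintype.card G : L) * f) := by
      rw [inv_mul_cancel_left₀ hcardL]
    rw [hfinal]
    exact Subfield.mul_mem _ (Subfield.inv_mem _ hcardK') hsum
  exact le_antisymm hK'leK hKleK'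

end Aux

/-- **Theorem (main).** Let `G` be a finite group and `V` a finite-dimensional faithful
representation of `G` over a field `k` (encoded via a linear, degree-preserving action of `G`
on the polynomial ring `k[V] = k[X_1,…,X_n]`, extended to the rational function field
`k(V) = Frac(k[V])`) whose characteristic does not divide `|G|`.  If `d` is such that the
polynomials of degree `≤ d` span `k(V)` over `K = k(V)^G`, then `K` is generated as a field
extension of `k` by the invariant polynomials of degree at most `2d+1`.  In particular,
`β_field(G,V) ≤ 2·D_span(G,V) + 1`. -/
theorem field_noether_le_two_mul_span_add_one
    (k : Type*) [Field k] (n : ℕ) (G : Type*) [Group G] [Fintype G]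
    [MulSemiringAction G (MvPolynomial (Fin n) k)]
    [SMulCommClass G k (MvPolynomial (Fin n) k)]
    (hlin : ∀ (g : G) (i : Fin n), ((g • (X i : MvPolynomial (Fin n) k)).IsHomogeneous 1))
    (hfaithful : ∀ g : G, (∀ p : MvPolynomial (Fin n) k, g • p = p) → g = 1)
    [MulSemiringAction G (FractionRing (MvPolynomial (Fin n) k))]
    (hcomp : ∀ (g : G) (p : MvPolynomial (Fin n) k),
      g • (algebraMap (MvPolynomial (Fin n) k) (FractionRing (MvPolynomial (Fin n) k)) p)
        = algebraMap (MvPolynomial (Fin n) k) (FractionRing (MvPolynomial (Fin n) k)) (g • p))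
    (hchar : (Fintype.card G : k) ≠ 0)
    (d : ℕ)
    (hspan : Submodule.span
        (FixedPoints.subfield G (FractionRing (MvPolynomial (Fin n) k)))
        ((algebraMap (MvPolynomial (Fin n) k) (FractionRing (MvPolynomial (Fin n) k))) ''
          {p : MvPolynomial (Fin n) k | p.totalDegree ≤ d}) = ⊤) :
    Subfield.closure
        (Set.range (algebraMap k (FractionRing (MvPolynomial (Fin n) k)))
          ∪ (algebraMap (MvPolynomial (Fin n) k) (FractionRing (MvPolynomial (Fin n) k)) ''
            {p : MvPolynomial (Fin n) k |
              p.totalDegree ≤ 2 * d + 1 ∧ ∀ g : G, g • p = p}))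
      = FixedPoints.subfield G (FractionRing (MvPolynomial (Fin n) k)) ∧
    sInf {e : ℕ | Subfield.closure
        (Set.range (algebraMap k (FractionRing (MvPolynomial (Fin n) k)))
          ∪ (algebraMap (MvPolynomial (Fin n) k) (FractionRing (MvPolynomial (Fin n) k)) ''
            {p : MvPolynomial (Fin n) k |
              p.totalDegree ≤ e ∧ ∀ g : G, g • p = p}))
      = FixedPoints.subfield G (FractionRing (MvPolynomial (Fin n) k))}
      ≤ 2 * sInf {e : ℕ | Submodule.span
        (FixedPoints.subfield G (FractionRing (MvPolynomial (Fin n) k)))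
        ((algebraMap (MvPolynomial (Fin n) k) (FractionRing (MvPolynomial (Fin n) k))) ''
          {p : MvPolynomial (Fin n) k | p.totalDegree ≤ e}) = ⊤} + 1 := by
  constructor
  · exact aux_closure hlin hcomp hchar d hspan
  · have hne : d ∈ {e : ℕ | Submodule.span
        (FixedPoints.subfield G (FractionRing (MvPolynomial (Fin n) k)))
        ((algebraMap (MvPolynomial (Fin n) k) (FractionRing (MvPolynomial (Fin n) k))) ''
          {p : MvPolynomial (Fin n) k | p.totalDegree ≤ e}) = ⊤} := hspan
    have hd₀ := Nat.sInf_mem ⟨d, hne⟩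
    exact Nat.sInf_le (aux_closure hlin hcomp hchar _ hd₀)
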